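/- arXiv:2404.08578 — 2 statements merged into one kernel-verified Lean document; each statement's English description precedes it below -/
import Mathlib

section
/- Let j*: T → S be an essentially surjective exact functor of triangulated categories admitting a fully faithful exact right adjoint j_*: S → T which preserves small coproducts, and let (A,B) be a t-structure on T such that (j*A, j*B) is a t-structure on S. If (A,B) is compactly generated, then (j*A, j*B) is compactly generated; moreover, if a collection P of compact objects generates the aisle A, then j*P compactly generates the aisle j*A. -/
open CategoryTheory Limits Pretriangulated AlgebraicGeometry

universe v u
section Tstr

variable {D : Type u} [Category.{v} D] [Preadditive D] [HasZeroObject D] [HasShift D ℤ]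
  [∀ n : ℤ, (shiftFunctor D n).Additive] [Pretriangulated D]

/-- The right orthogonal of a collection of objects. -/
def perpSet (A : Set D) : Set D := {Y | ∀ X ∈ A, ∀ f : X ⟶ Y, f = 0}

/-- `(A, B)` is a t-structure on the (strictly full triangulated) subcategory `S`
of the ambient pretriangulated category: orthogonality (`Hom(A, B[-1]) = 0`),
stability of `A` (resp. `B`) under positive (resp. negative) shifts, and existence
of truncation triangles for every object of `S`. -/
structure IsTStructureOn (S A B : Set D) : Prop where
  subset_A : A ⊆ S
  subset_B : B ⊆ S
  iso_closed_A : ∀ {E F : D}, (E ≅ F) → E ∈ A → F ∈ A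
  iso_closed_B : ∀ {E F : D}, (E ≅ F) → E ∈ B → F ∈ B
  shift_A : ∀ E ∈ A, E⟦(1 : ℤ)⟧ ∈ A
  shift_B : ∀ E ∈ B, E⟦(-1 : ℤ)⟧ ∈ B
  hom_zero : ∀ E ∈ A, ∀ F : D, F⟦(1 : ℤ)⟧ ∈ B → ∀ f : E ⟶ F, f = 0
  exists_triangle : ∀ E ∈ S, ∃ (a b : D) (_ : a ∈ A) (_ : b⟦(1 : ℤ)⟧ ∈ B)
    (f : a ⟶ E) (g : E ⟶ b) (h : b ⟶ a⟦(1 : ℤ)⟧), Triangle.mk f g h ∈ distTriang D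

/-- `(A, B)` is a t-structure on the ambient category. -/
def IsTStructure (A B : Set D) : Prop := IsTStructureOn Set.univ A B

/-- The t-structure `(A, B)` restricts to the triangulated subcategory `S`:
`(A ∩ S, B ∩ S)` is a t-structure on `S`. -/
def RestrictsTo (A B S : Set D) : Prop := IsTStructureOn S (A ∩ S) (B ∩ S)

/-- The coaisle `A^⊥[1]` associated to an aisle `A` (so that `(A, coaisleOf A)` is the
t-structure generated by the aisle `A`, when `A` is an aisle). -/
def coaisleOf (A : Set D) : Set D := {Y : D | ∀ X ∈ A, ∀ f : X ⟶ Y⟦(-1 : ℤ)⟧, f = 0}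

/-- The coaisle `A^⊥[1]`, relative to an ambient triangulated subcategory `S`. -/
def coaisleIn (S A : Set D) : Set D :=
  {Y : D | Y ∈ S ∧ ∀ X ∈ A, ∀ f : X ⟶ Y⟦(-1 : ℤ)⟧, f = 0}

/-- A subset `T` of `S` is a cocomplete preaisle in `S`: strictly full (within `S`),
closed under positive shifts, extensions and small coproducts (taken in the ambient
category, with vertices in `S`). -/
structure IsCocompletePreaisleIn (S T : Set D) : Prop where
  subset : T ⊆ S
  iso_closed : ∀ {E F : D}, (E ≅ F) → F ∈ S → E ∈ T → F ∈ T
  shift : ∀ E ∈ T, E⟦(1 : ℤ)⟧ ∈ T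
  ext : ∀ Tr ∈ distTriang D, Tr.obj₁ ∈ T → Tr.obj₃ ∈ T → Tr.obj₂ ∈ S → Tr.obj₂ ∈ T
  coprod : ∀ (ι : Type v) (f : ι → D), (∀ i, f i ∈ T) → ∀ c : Cofan f, IsColimit c →
    c.pt ∈ S → c.pt ∈ T

/-- The smallest cocomplete preaisle of `S` containing `P`; for `S = Set.univ` this
is `⟨P⟩^{≤0}`, the smallest cocomplete preaisle containing `P`. -/
def cocompletePreaisleClosureIn (S P : Set D) : Set D :=
  ⋂₀ {T : Set D | P ⊆ T ∧ IsCocompletePreaisleIn S T}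

/-- `⟨P⟩^{≤0}`: the smallest cocomplete preaisle containing `P`. -/
def cocompletePreaisleClosure (P : Set D) : Set D :=
  cocompletePreaisleClosureIn Set.univ P

/-- `Coprod(P)`: the smallest strictly full subcategory containing `P` which is closed
under extensions and small coproducts. -/
def coprodClosure (P : Set D) : Set D :=
  ⋂₀ {T : Set D | P ⊆ T ∧ (∀ {E F : D}, (E ≅ F) → E ∈ T → F ∈ T) ∧
    (∀ Tr ∈ distTriang D, Tr.obj₁ ∈ T → Tr.obj₃ ∈ T → Tr.obj₂ ∈ T) ∧
    (∀ (ι : Type v) (f : ι → D), (∀ i, f i ∈ T) → ∀ c : Cofan f, IsColimit c → c.pt ∈ T)}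

/-- `P` is a compact object relative to the (coproduct-closed) subcategory `S`:
`Hom(P, -)` commutes with small coproducts of objects of `S`. -/
def IsCompactIn (S : Set D) (P : D) : Prop :=
  P ∈ S ∧ ∀ (ι : Type v) (f : ι → D), (∀ i, f i ∈ S) → ∀ c : Cofan f, IsColimit c → c.pt ∈ S →
    (∀ g : P ⟶ c.pt, ∃ (s : Finset ι) (k : (i : ι) → (P ⟶ f i)),
        g = ∑ i ∈ s, k i ≫ c.inj i) ∧
    (∀ (s : Finset ι) (k : (i : ι) → (P ⟶ f i)),
        (∑ i ∈ s, k i ≫ c.inj i) = 0 → ∀ i ∈ s, k i = 0)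

/-- A compact object of the ambient category:  `Hom(P, -)` commutes with small
coproducts. -/
def IsCompactObj (P : D) : Prop := IsCompactIn Set.univ P

/-- `A` is an aisle: a strictly full preaisle whose inclusion admits a right adjoint. -/
structure IsAisle (A : Set D) : Prop where
  iso_closed : ∀ {E F : D}, (E ≅ F) → E ∈ A → F ∈ A
  shift : ∀ E ∈ A, E⟦(1 : ℤ)⟧ ∈ A
  ext : ∀ Tr ∈ distTriang D, Tr.obj₁ ∈ A → Tr.obj₃ ∈ A → Tr.obj₂ ∈ A
  adj : (ObjectProperty.ι (fun X : D => X ∈ A)).IsLeftAdjoint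

/-- `(A, B)` is a compactly generated t-structure on the triangulated subcategory `S`:
it is a t-structure on `S` whose aisle is the smallest cocomplete preaisle (in `S`)
containing some collection of compact objects (of `S`). -/
def IsCompactlyGeneratedTStructureOn (S A B : Set D) : Prop :=
  IsTStructureOn S A B ∧ ∃ P : Set D, (∀ p ∈ P, IsCompactIn S p) ∧
    A = cocompletePreaisleClosureIn S P

end Tstr

/-- The strictly full closure of the image of a collection of objects under a map
on objects (e.g. a derived pullback functor). -/
def imgSet {C : Type*} {D : Type u} [Category.{v} D] (F : C → D) (A : Set C) : Set D :=
  {d : D | ∃ a ∈ A, Nonempty (d ≅ F a)}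

section Aux

variable {D : Type u} [Category.{v} D] [Preadditive D] [HasZeroObject D] [HasShift D ℤ]
  [∀ n : ℤ, (shiftFunctor D n).Additive] [Pretriangulated D]

/-- An object left-orthogonal to `B⟦-1⟧` belongs to the aisle `A`. -/
lemma mem_aisle_of_orthogonal {A B : Set D} (h : IsTStructureOn Set.univ A B) {Y : D}
    (hY : ∀ F : D, F⟦(1 : ℤ)⟧ ∈ B → ∀ g : Y ⟶ F, g = 0) : Y ∈ A := by
  obtain ⟨a, b, ha, hb, f, g, hh, hT⟩ := h.exists_triangle Y (Set.mem_univ Y)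
  have hg : g = 0 := hY b hb g
  obtain ⟨r, hr⟩ := Triangle.yoneda_exact₂ _ (rot_of_distTriang _ hT) (𝟙 b)
    (show g ≫ 𝟙 b = 0 by rw [hg, zero_comp])
  have hr0 : r = 0 := h.hom_zero _ (h.shift_A a ha) b hb r
  have hzb : IsZero b := by
    rw [IsZero.iff_id_eq_zero, hr, hr0, comp_zero]; rfl
  have : IsIso ((Triangle.mk f g hh).mor₁) :=
    (Triangle.isZero₃_iff_isIso₁ _ hT).1 hzb
  exact h.iso_closed_A (@asIso _ _ _ _ ((Triangle.mk f g hh).mor₁) this) ha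

/-- The aisle of a t-structure is closed under extensions. -/
lemma aisle_ext {A B : Set D} (h : IsTStructureOn Set.univ A B)
    (Tr : Triangle D) (hTr : Tr ∈ distTriang D) (h1 : Tr.obj₁ ∈ A) (h3 : Tr.obj₃ ∈ A) :
    Tr.obj₂ ∈ A := by
  refine mem_aisle_of_orthogonal h (fun F hF g => ?_)
  obtain ⟨g', hg'⟩ := Triangle.yoneda_exact₂ _ hTr g (h.hom_zero _ h1 F hF _)
  rw [hg', h.hom_zero _ h3 F hF g', comp_zero]

/-- The aisle of a t-structure is closed under small coproducts. -/
lemma aisle_coprod {A B : Set D} (h : IsTStructureOn Set.univ A B)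
    {ι : Type*} {f : ι → D} (hf : ∀ i, f i ∈ A) (c : Cofan f) (hc : IsColimit c) :
    c.pt ∈ A := by
  refine mem_aisle_of_orthogonal h (fun F hF g => ?_)
  refine Cofan.IsColimit.hom_ext hc g 0 (fun i => ?_)
  rw [comp_zero]
  exact h.hom_zero _ (hf i) F hF _

lemma mem_cpClosure_iff (Q : Set D) (x : D) :
    x ∈ cocompletePreaisleClosure Q ↔
      ∀ T' : Set D, Q ⊆ T' → IsCocompletePreaisleIn Set.univ T' → x ∈ T' := by
  constructor
  · intro hx T' h1 h2
    exact Set.mem_sInter.1 hx T' ⟨h1, h2⟩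
  · intro hx
    exact Set.mem_sInter.2 (fun T' hT' => hx T' hT'.1 hT'.2)

lemma subset_closure' (Q : Set D) : Q ⊆ cocompletePreaisleClosure Q :=
  fun x hx => (mem_cpClosure_iff Q x).2 (fun _ h1 _ => h1 hx)

lemma closure_min {Q T' : Set D} (h1 : Q ⊆ T') (h2 : IsCocompletePreaisleIn Set.univ T') :
    cocompletePreaisleClosure Q ⊆ T' :=
  fun x hx => (mem_cpClosure_iff Q x).1 hx T' h1 h2

end Aux

/-- A functor preserving the coproduct maps a colimit cofan to a colimit cofan. -/
noncomputable def mapCofanIsColimit {C₁ : Type*} [Category C₁] {C₂ : Type*} [Category C₂]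
    (F : C₁ ⥤ C₂) {ι : Type*} {f : ι → C₁} (c : Cofan f) (hc : IsColimit c)
    [PreservesColimit (Discrete.functor f) F] :
    IsColimit (Cofan.mk (F.obj c.pt) (fun i => F.map (c.inj i))) := by
  let e : Discrete.functor (fun i => F.obj (f i)) ≅ Discrete.functor f ⋙ F :=
    Discrete.natIso (fun i => Iso.refl _)
  refine IsColimit.ofIsoColimit ((IsColimit.precomposeHomEquiv e (F.mapCocone c)).symm
    (isColimitOfPreserves F hc)) (Cocones.ext (Iso.refl _) ?_)
  rintro ⟨i⟩
  simp [e, Cofan.inj]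

/-!
Statement 12: Let `j* : T → S` be an essentially surjective exact functor of
triangulated categories admitting a fully faithful exact right adjoint `j_* : S → T`
which preserves small coproducts, and let `(A, B)` be a t-structure on `T` such that
`(j*A, j*B)` is a t-structure on `S`.  If `(A, B)` is compactly generated then so is
`(j*A, j*B)`; moreover, if a collection `P` of compact objects generates the aisle `A`,
then `j*P` compactly generates the aisle `j*A`.
-/
theorem statement12
    (T : Type u) [Category.{v} T] [Preadditive T] [HasZeroObject T] [HasShift T ℤ]
    [∀ n : ℤ, (shiftFunctor T n).Additive] [Pretriangulated T]
    (S : Type u) [Category.{v} S] [Preadditive S] [HasZeroObject S] [HasShift S ℤ]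
    [∀ n : ℤ, (shiftFunctor S n).Additive] [Pretriangulated S]
    (jstar : T ⥤ S) [jstar.CommShift ℤ] [jstar.IsTriangulated] [jstar.EssSurj]
    (jlow : S ⥤ T) [jlow.Full] [jlow.Faithful] [jlow.CommShift ℤ] [jlow.IsTriangulated]
    (adj : jstar ⊣ jlow)
    (hpres : ∀ ι : Type v, PreservesColimitsOfShape (Discrete ι) jlow)
    (A B : Set T) (hAB : IsTStructure A B)
    (himg : IsTStructure (imgSet jstar.obj A) (imgSet jstar.obj B)) :
    ((∃ P : Set T, (∀ p ∈ P, IsCompactObj p) ∧ A = cocompletePreaisleClosure P) →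
      ∃ Q : Set S, (∀ q ∈ Q, IsCompactObj q) ∧
        imgSet jstar.obj A = cocompletePreaisleClosure Q) ∧
    (∀ P : Set T, (∀ p ∈ P, IsCompactObj p) → A = cocompletePreaisleClosure P →
      (∀ q ∈ imgSet jstar.obj P, IsCompactObj q) ∧
        imgSet jstar.obj A = cocompletePreaisleClosure (imgSet jstar.obj P)) := by
  have himg' : IsTStructureOn Set.univ (imgSet jstar.obj A) (imgSet jstar.obj B) := himg
  have main : ∀ P : Set T, (∀ p ∈ P, IsCompactObj p) → A = cocompletePreaisleClosure P →
      (∀ q ∈ imgSet jstar.obj P, IsCompactObj q) ∧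
        imgSet jstar.obj A = cocompletePreaisleClosure (imgSet jstar.obj P) := by
    intro P hP hAP
    constructor
    · -- compactness of the images of the compact generators
      rintro q ⟨p, hp, ⟨e⟩⟩
      have hpc := hP p hp
      refine ⟨Set.mem_univ _, ?_⟩
      intro ι f hf c hc _
      haveI := hpres ι
      have hc' : IsColimit (Cofan.mk (jlow.obj c.pt) (fun i => jlow.map (c.inj i))) :=
        mapCofanIsColimit jlow c hc
      obtain ⟨hex, hzero⟩ := hpc.2 ι (fun i => jlow.obj (f i)) (fun _ => Set.mem_univ _)
        _ hc' (Set.mem_univ _)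
      constructor
      · intro g
        obtain ⟨s, k, hk⟩ := hex (adj.homEquiv p c.pt (e.inv ≫ g))
        simp only [cofan_mk_inj] at hk
        refine ⟨s, fun i => e.hom ≫ (adj.homEquiv p (f i)).symm (k i), ?_⟩
        have key : e.inv ≫ g = ∑ i ∈ s, (adj.homEquiv p (f i)).symm (k i) ≫ c.inj i := by
          have h1 : e.inv ≫ g = (adj.homEquiv p c.pt).symm
              (∑ i ∈ s, k i ≫ jlow.map (c.inj i)) := by
            rw [← hk, Equiv.symm_apply_apply]
          rw [h1]
          have h2 : (adj.homEquiv p c.pt).symm (∑ i ∈ s, k i ≫ jlow.map (c.inj i)) =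
              ∑ i ∈ s, (adj.homEquiv p c.pt).symm (k i ≫ jlow.map (c.inj i)) := by
            simp only [Adjunction.homEquiv_counit, Functor.map_sum, Preadditive.sum_comp]
          rw [h2]
          exact Finset.sum_congr rfl
            (fun i _ => adj.homEquiv_naturality_right_symm (k i) (c.inj i))
        calc g = e.hom ≫ (e.inv ≫ g) := by simp
          _ = e.hom ≫ ∑ i ∈ s, (adj.homEquiv p (f i)).symm (k i) ≫ c.inj i := by rw [key]
          _ = ∑ i ∈ s, (e.hom ≫ (adj.homEquiv p (f i)).symm (k i)) ≫ c.inj i := by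
              rw [Preadditive.comp_sum]
              simp only [Category.assoc]
      · intro s k' hk'0 i hi
        have hsum0 : (∑ j ∈ s, (adj.homEquiv p (f j)) (e.inv ≫ k' j) ≫
            (Cofan.mk (jlow.obj c.pt) (fun i => jlow.map (c.inj i))).inj j) = 0 := by
          simp only [cofan_mk_inj]
          have h1 : ∀ j, (adj.homEquiv p (f j)) (e.inv ≫ k' j) ≫ jlow.map (c.inj j) =
              (adj.homEquiv p c.pt) ((e.inv ≫ k' j) ≫ c.inj j) :=
            fun j => (adj.homEquiv_naturality_right _ _).symm
          rw [Finset.sum_congr rfl (fun j _ => h1 j)]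
          have h2 : (∑ j ∈ s, (adj.homEquiv p c.pt) ((e.inv ≫ k' j) ≫ c.inj j)) =
              (adj.homEquiv p c.pt) (∑ j ∈ s, (e.inv ≫ k' j) ≫ c.inj j) := by
            simp only [Adjunction.homEquiv_unit, Functor.map_sum, Preadditive.comp_sum]
          rw [h2]
          have h3 : (∑ j ∈ s, (e.inv ≫ k' j) ≫ c.inj j) = 0 := by
            simp only [Category.assoc, ← Preadditive.comp_sum, hk'0, comp_zero]
          rw [h3]
          simp [Adjunction.homEquiv_unit]
        have h4 : (adj.homEquiv p (f i)) (e.inv ≫ k' i) = 0 :=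
          hzero s (fun j => (adj.homEquiv p (f j)) (e.inv ≫ k' j)) hsum0 i hi
        have h5 : e.inv ≫ k' i = 0 := by
          have := congrArg (adj.homEquiv p (f i)).symm h4
          rw [Equiv.symm_apply_apply] at this
          rw [this]
          simp [Adjunction.homEquiv_counit]
        calc k' i = e.hom ≫ (e.inv ≫ k' i) := by simp
          _ = 0 := by rw [h5, comp_zero]
    · -- the aisle equality
      apply Set.Subset.antisymm
      · -- img A ⊆ closure (img P)
        set W := cocompletePreaisleClosure (imgSet jstar.obj P) with hW
        have hWc : IsCocompletePreaisleIn Set.univ W :=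
          { subset := fun _ _ => Set.mem_univ _
            iso_closed := fun e _ hE => (mem_cpClosure_iff _ _).2
              (fun T' h1 h2 => h2.iso_closed e (Set.mem_univ _)
                ((mem_cpClosure_iff _ _).1 hE T' h1 h2))
            shift := fun E hE => (mem_cpClosure_iff _ _).2
              (fun T' h1 h2 => h2.shift E ((mem_cpClosure_iff _ _).1 hE T' h1 h2))
            ext := fun Tr hTr ha hb _ => (mem_cpClosure_iff _ _).2
              (fun T' h1 h2 => h2.ext Tr hTr ((mem_cpClosure_iff _ _).1 ha T' h1 h2)
                ((mem_cpClosure_iff _ _).1 hb T' h1 h2) (Set.mem_univ _))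
            coprod := fun ι f hf c hc _ => (mem_cpClosure_iff _ _).2
              (fun T' h1 h2 => h2.coprod ι f
                (fun i => (mem_cpClosure_iff _ _).1 (hf i) T' h1 h2) c hc (Set.mem_univ _)) }
        set U : Set T := {X : T | jstar.obj X ∈ W} with hU
        haveI : PreservesColimitsOfSize.{v, v} jstar := adj.leftAdjoint_preservesColimits
        have hUc : IsCocompletePreaisleIn Set.univ U :=
          { subset := fun _ _ => Set.mem_univ _
            iso_closed := fun {E F} e _ hE =>
              hWc.iso_closed (jstar.mapIso e) (Set.mem_univ _) hE
            shift := fun E hE =>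
              hWc.iso_closed ((jstar.commShiftIso (1 : ℤ)).app E).symm (Set.mem_univ _)
                (hWc.shift _ hE)
            ext := fun Tr hTr ha hb _ =>
              hWc.ext (jstar.mapTriangle.obj Tr) (jstar.map_distinguished Tr hTr) ha hb
                (Set.mem_univ _)
            coprod := fun ι f hf c hc _ =>
              hWc.coprod ι (fun i => jstar.obj (f i)) hf _
                (mapCofanIsColimit jstar c hc) (Set.mem_univ _) }
        have hPU : P ⊆ U := fun p hp => subset_closure' _ ⟨p, hp, ⟨Iso.refl _⟩⟩
        have hAU : A ⊆ U := by
          rw [hAP]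
          exact closure_min hPU hUc
        rintro d ⟨a, ha, ⟨e⟩⟩
        exact hWc.iso_closed e.symm (Set.mem_univ _) (hAU ha)
      · -- closure (img P) ⊆ img A
        refine closure_min ?_ ?_
        · rintro q ⟨p, hp, ⟨e⟩⟩
          have hPA : P ⊆ A := by
            rw [hAP]; exact subset_closure' P
          exact ⟨p, hPA hp, ⟨e⟩⟩
        · exact
            { subset := fun _ _ => Set.mem_univ _
              iso_closed := fun e _ hE => himg'.iso_closed_A e hE
              shift := fun E hE => himg'.shift_A E hE
              ext := fun Tr hTr ha hb _ => aisle_ext himg' Tr hTr ha hb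
              coprod := fun ι f hf c hc _ => aisle_coprod himg' hf c hc }
  refine ⟨?_, main⟩
  rintro ⟨P, hP, hAP⟩
  exact ⟨imgSet jstar.obj P, (main P hP hAP).1, (main P hP hAP).2⟩
end

section
/- Let X be a Noetherian scheme, Z a closed subset of X, and φ a Thomason filtration on X. The following are equivalent: (1) φ satisfies the weak Cousin condition across Z; (2) for every affine open subscheme U of X with Z∩U nonempty, φ∩U satisfies the weak Cousin condition across Z∩U; (3) for every point s in Z, the restriction φ_s of φ to Spec(O_{X,s}) satisfies the weak Cousin condition across Z∩Spec(O_{X,s}). -/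
open CategoryTheory Limits Pretriangulated AlgebraicGeometry

universe v u
section Topology

variable {X : Type u} [TopologicalSpace X]

/-- A Thomason filtration on a (Noetherian) topological space: a decreasing
`ℤ`-indexed family of specialization-closed (= Thomason, in the Noetherian case) subsets. -/
structure ThomasonFiltration (X : Type u) [TopologicalSpace X] where
  toFun : ℤ → Set X
  stable : ∀ n, StableUnderSpecialization (toFun n)
  antitone : ∀ n, toFun (n + 1) ⊆ toFun n

/-- `p ⤳ q` is a direct generalization: `p ≠ q` and there is no strictly intermediate point. -/
def DirectGen (p q : X) : Prop :=
  p ⤳ q ∧ p ≠ q ∧ ∀ s : X, p ⤳ s → s ⤳ q → s = p ∨ s = q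

/-- A Thomason filtration `φ` is weak Cousin across a subset `Z`: for every direct
generalization `p ⤳ q` with `p, q ∈ Z` and `q ∈ φ(n)`, one has `p ∈ φ(n-1)`. -/
def WeakCousinAcross (φ : ThomasonFiltration X) (Z : Set X) : Prop :=
  ∀ p q : X, DirectGen p q → p ∈ Z → q ∈ Z → ∀ n : ℤ, q ∈ φ.toFun n → p ∈ φ.toFun (n - 1)

/-- `φ` is constant on a subset `S`: `φ(n) ∩ S` equals `S` for all `n` or `∅` for all `n`. -/
def ThomasonFiltration.ConstantOn (φ : ThomasonFiltration X) (S : Set X) : Prop :=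
  (∀ n, φ.toFun n ∩ S = S) ∨ (∀ n, φ.toFun n ∩ S = ∅)

/-- The restriction of a Thomason filtration to a subspace. -/
def ThomasonFiltration.restrictTo (φ : ThomasonFiltration X) (S : Set X) :
    ThomasonFiltration S where
  toFun n := Subtype.val ⁻¹' φ.toFun n
  stable n := fun _ _ h hx => φ.stable n (h.map continuous_subtype_val) hx
  antitone n := fun _ hx => φ.antitone n hx

/-- The intersection `φ ∩ Z` of a Thomason filtration with a specialization-closed
subset `Z`, as a Thomason filtration on the ambient space. -/
def ThomasonFiltration.inter (φ : ThomasonFiltration X) (Z : Set X)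
    (hZ : StableUnderSpecialization Z) : ThomasonFiltration X where
  toFun n := φ.toFun n ∩ Z
  stable n := fun _ _ h hx => ⟨φ.stable n h hx.1, hZ h hx.2⟩
  antitone n := fun _ hx => ⟨φ.antitone n hx.1, hx.2⟩

end Topology


section Aux
variable {X : Type u} [TopologicalSpace X]

lemma directGen_subtype {S : Set X} {p q : X} (hp : p ∈ S) (hq : q ∈ S)
    (hd : DirectGen p q) : DirectGen (⟨p, hp⟩ : S) ⟨q, hq⟩ := by
  refine ⟨(subtype_specializes_iff _ _).mpr hd.1,
    fun e => hd.2.1 (congrArg Subtype.val e), fun s hps hsq => ?_⟩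
  rcases hd.2.2 s ((subtype_specializes_iff _ _).mp hps)
    ((subtype_specializes_iff _ _).mp hsq) with h | h
  · exact Or.inl (Subtype.ext h)
  · exact Or.inr (Subtype.ext h)

lemma wcRestrict (φ : ThomasonFiltration X) (Z S : Set X)
    (hS : StableUnderGeneralization S) (h : WeakCousinAcross φ Z) :
    WeakCousinAcross (φ.restrictTo S) (Subtype.val ⁻¹' Z) := by
  rintro p q ⟨hpq, hne, hmid⟩ hpZ hqZ n hqn
  have hd : DirectGen (p : X) (q : X) := by
    refine ⟨(subtype_specializes_iff _ _).mp hpq,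
      fun e => hne (Subtype.ext e), fun t hpt htq => ?_⟩
    have htS : t ∈ S := hS htq q.2
    rcases hmid ⟨t, htS⟩ ((subtype_specializes_iff _ _).mpr hpt)
      ((subtype_specializes_iff _ _).mpr htq) with h1 | h1
    · exact Or.inl (congrArg Subtype.val h1)
    · exact Or.inr (congrArg Subtype.val h1)
  exact h p q hd hpZ hqZ n hqn

end Aux

/-!
Statement 15: Let `X` be a Noetherian scheme, `Z` a closed subset of `X`, and `φ` a
Thomason filtration on `X`. The following are equivalent:
(1) `φ` satisfies the weak Cousin condition across `Z`;
(2) for every affine open `U` of `X` with `Z ∩ U ≠ ∅`, the restriction `φ ∩ U` satisfies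
    the weak Cousin condition across `Z ∩ U`;
(3) for every point `s ∈ Z`, the restriction `φ_s` of `φ` to `Spec O_{X,s}` (viewed
    inside `X` as the subspace of generalizations of `s`) satisfies the weak Cousin
    condition across `Z ∩ Spec O_{X,s}`.
-/
theorem statement15 (X : Scheme.{u}) [IsNoetherian X]
    (Z : Set X) (hZ : IsClosed Z) (φ : ThomasonFiltration X) :
    (WeakCousinAcross φ Z ↔
      ∀ U : X.Opens, IsAffineOpen U → (Z ∩ (U : Set X)).Nonempty →
        WeakCousinAcross (φ.restrictTo (U : Set X)) (Subtype.val ⁻¹' Z)) ∧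
    (WeakCousinAcross φ Z ↔
      ∀ s : X, s ∈ Z →
        WeakCousinAcross (φ.restrictTo {q : X | q ⤳ s}) (Subtype.val ⁻¹' Z)) := by
  constructor
  · constructor
    · intro h U hU hne
      exact wcRestrict φ Z (U : Set X) U.isOpen.stableUnderGeneralization h
    · intro h p q hd hp hq n hqn
      obtain ⟨_, ⟨U, hU, rfl⟩, hqU, -⟩ :=
        X.isBasis_affineOpens.exists_subset_of_mem_open (Set.mem_univ q) isOpen_univ
      have hpU : p ∈ (U : Set X) := U.isOpen.stableUnderGeneralization hd.1 hqU
      exact h U hU ⟨q, hq, hqU⟩ ⟨p, hpU⟩ ⟨q, hqU⟩ (directGen_subtype hpU hqU hd) hp hq n hqn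
  · constructor
    · intro h s _
      refine wcRestrict φ Z {q : X | q ⤳ s} (fun a b hab hb => ?_) h
      exact hab.trans hb
    · intro h p q hd hp hq n hqn
      have hpS : p ∈ {x : X | x ⤳ q} := hd.1
      have hqS : q ∈ {x : X | x ⤳ q} := specializes_refl q
      exact h q hq ⟨p, hpS⟩ ⟨q, hqS⟩ (directGen_subtype hpS hqS hd) hp hq n hqn
end
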